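/- Let h : (0,∞) → ℝ be Burg's entropy h(y) = −log y in dimension one, g : (0,∞) → ℝ twice differentiable, and ψ(y) = −h(y) + h'(y)·y − g(y) = log y − 1 − g(y). Then ψ ∘ (h*)' (i.e., x ↦ ψ(−1/x) on (−∞,0)) is convex on (−∞, 0) if and only if for all y > 0, g''(y) ≤ (1 − 2y·g'(y))/y². -/

import Mathlib

open Set

theorem stmt8 (g g' g'' : ℝ → ℝ)
    (hg : ∀ y > (0:ℝ), HasDerivAt g (g' y) y)
    (hg' : ∀ y > (0:ℝ), HasDerivAt g' (g'' y) y) :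
    ConvexOn ℝ (Set.Iio (0 : ℝ)) (fun x => Real.log (-1 / x) - 1 - g (-1 / x)) ↔
      ∀ y > (0:ℝ), g'' y ≤ (1 - 2 * y * g' y) / y ^ 2 := by
  set F : ℝ → ℝ := fun x => Real.log (-1 / x) - 1 - g (-1 / x) with hF
  set F1 : ℝ → ℝ := fun x => -1/x - g' (-1/x) * (1/x^2) with hF1
  set F2 : ℝ → ℝ := fun x =>
    1/x^2 - (g'' (-1/x) * (1/x^2) * (1/x^2) + g' (-1/x) * (-2/x^3)) with hF2
  have hpos : ∀ x : ℝ, x < 0 → (0:ℝ) < -1/x := fun x hx =>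
    div_pos_iff.2 (Or.inr ⟨by norm_num, hx⟩)
  have hu : ∀ x : ℝ, x < 0 → HasDerivAt (fun x : ℝ => -1/x) (1/x^2) x := by
    intro x hx
    have h := (hasDerivAt_inv hx.ne).neg
    refine h.congr_deriv ?_ |>.congr_of_eventuallyEq ?_
    · field_simp
    · exact Filter.Eventually.of_forall fun z => by simp [neg_div]
  have hder1 : ∀ x ∈ Iio (0:ℝ), HasDerivAt F (F1 x) x := by
    intro x hx
    have hne : (-1/x : ℝ) ≠ 0 := (hpos x hx).ne'
    have hlog := ((hu x hx).log hne)
    have hgc := ((hg _ (hpos x hx)).comp x (hu x hx))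
    have := (hlog.sub_const 1).sub hgc
    refine this.congr_deriv ?_
    rw [hF1]
    have hx0 : x ≠ 0 := ne_of_lt hx
    field_simp
  have hder2 : ∀ x ∈ Iio (0:ℝ), HasDerivAt F1 (F2 x) x := by
    intro x hx
    have hx0 : x ≠ 0 := ne_of_lt hx
    have hgd := ((hg' _ (hpos x hx)).comp x (hu x hx))
    have h2 : HasDerivAt (fun x : ℝ => 1/x^2) (-2/x^3) x := by
      have h := (hasDerivAt_pow 2 x).inv (pow_ne_zero 2 hx0)
      norm_num at h
      simp only [one_div]
      refine h.congr_deriv ?_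
      field_simp
    have := (hu x hx).sub (hgd.mul h2)
    exact this
  -- equivalence of pointwise conditions
  constructor
  · intro hconv y hy
    have hmono : MonotoneOn F1 (Iio (0:ℝ)) := by
      intro a ha b hb hab
      rcases eq_or_lt_of_le hab with rfl | hab'
      · exact le_rfl
      calc F1 a ≤ slope F a b := hconv.le_slope_of_hasDerivAt ha hb hab' (hder1 a ha)
        _ ≤ F1 b := hconv.slope_le_of_hasDerivAt ha hb hab' (hder1 b hb)
    set x : ℝ := -1/y with hxdef
    have hx : x ∈ Iio (0:ℝ) := by
      simp only [mem_Iio, hxdef]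
      exact div_neg_of_neg_of_pos (by norm_num) hy
    have hF2x : 0 ≤ F2 x := by
      have htend := hasDerivAt_iff_tendsto_slope.mp (hder2 x hx)
      refine ge_of_tendsto htend ?_
      filter_upwards [eventually_nhdsWithin_of_eventually_nhds
        ((isOpen_Iio).eventually_mem hx), self_mem_nhdsWithin] with z hz hzx
      have hzx' : z ≠ x := hzx
      rcases lt_or_gt_of_ne hzx' with h1 | h1
      · rw [slope_def_field]
        exact div_nonneg_iff.2 (Or.inr ⟨sub_nonpos.2 (hmono hz hx h1.le),
          sub_nonpos.2 h1.le⟩)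
      · rw [slope_def_field]
        exact div_nonneg (sub_nonneg.2 (hmono hx hz h1.le)) (sub_nonneg.2 h1.le)
    have hx0 : x ≠ 0 := ne_of_lt hx
    have hyx : -1/x = y := by rw [hxdef]; field_simp
    have e1 : 1/x^2 = y^2 := by rw [hxdef]; field_simp
    have e2 : -2/x^3 = 2*y^3 := by rw [hxdef]; field_simp
    rw [hF2] at hF2x
    simp only [hyx, e1, e2] at hF2x
    have hy2 : (0:ℝ) < y^2 := by positivity
    rw [le_div_iff₀ hy2]
    nlinarith [hF2x, hy2, mul_pos hy2 hy2]
  · intro h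
    have hint : interior (Iio (0:ℝ)) = Iio 0 := interior_Iio
    refine convexOn_of_hasDerivWithinAt2_nonneg (f' := F1) (f'' := F2) (convex_Iio 0) ?_ ?_ ?_ ?_
    · exact fun x hx => (hder1 x hx).continuousAt.continuousWithinAt
    · rw [hint]; exact fun x hx => (hder1 x hx).hasDerivWithinAt
    · rw [hint]; exact fun x hx => (hder2 x hx).hasDerivWithinAt
    · rw [hint]
      intro x hx
      have hx0 : x ≠ 0 := ne_of_lt hx
      set y : ℝ := -1/x with hydef
      have hy : 0 < y := hpos x hx
      have e1 : 1/x^2 = y^2 := by rw [hydef]; field_simp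
      have e2 : -2/x^3 = 2*y^3 := by rw [hydef]; field_simp
      have hineq := h y hy
      have hy2 : (0:ℝ) < y^2 := by positivity
      rw [le_div_iff₀ hy2] at hineq
      rw [hF2]
      simp only [← hydef, e1, e2]
      nlinarith [hineq, hy2, mul_pos hy2 hy2]
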